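/- Let m ≤ k ≤ n be positive integers, ε > 0 with εk > (1+ε)m, and x ∈ [0,1]^n with Σ_{i∈[n]} x_i = k. Set p_i = x_i/(1+ε) and, for S ⊆ [n], P(S) = ∏_{i∈S} p_i · ∏_{i∉S} (1 − p_i) (the independent Bernoulli product measure). Then for every T ⊆ [n] with |T| = m: Σ_{S : T ⊆ S, |S| ≤ k} P(S) ≥ (1+ε)^{−m} · (1 − exp(−(εk − (1+ε)m)² / (k(2+ε)(1+ε)))) · ∏_{i∈T} x_i · Σ_{S : |S| ≤ k} P(S). Moreover, if ε ∈ (0,1) and k ≥ 4m/ε + (12/ε²)·log(1/ε), then (1+ε)^{−m} · (1 − exp(−(εk − (1+ε)m)² / (k(2+ε)(1+ε)))) ≥ (1−ε)^m, so the conditional probability Pr[T ⊆ 𝒮 | |𝒮| ≤ k] is at least (1−ε)^m ∏_{i∈T} x_i. -/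

import Mathlib

open Matrix Finset

private lemma log_key {y : ℝ} (hy : 1 ≤ y) : 2 * (y - 1) / (y + 1) ≤ Real.log y := by
  set f : ℝ → ℝ := fun z => Real.log z - 2 + 4 * (z + 1)⁻¹ with hf
  have hderiv : ∀ z ∈ Set.Ici (1:ℝ), HasDerivAt f (z⁻¹ + 4 * (-1 / (z+1)^2)) z := by
    intro z hz
    have hz1 : (1:ℝ) ≤ z := hz
    have h1 : HasDerivAt Real.log z⁻¹ z := Real.hasDerivAt_log (by linarith)
    have h2 : HasDerivAt (fun w : ℝ => w + 1) 1 z := (hasDerivAt_id z).add_const 1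
    have h3 : HasDerivAt (fun w : ℝ => (w+1)⁻¹) (-1/(z+1)^2) z := by
      have := h2.inv (by linarith)
      exact this
    exact (h1.sub_const 2).add (h3.const_mul 4)
  have hmono : MonotoneOn f (Set.Ici 1) := by
    apply monotoneOn_of_deriv_nonneg (convex_Ici 1)
    · exact fun z hz => ((hderiv z hz).continuousAt).continuousWithinAt
    · intro z hz
      rw [interior_Ici] at hz
      exact ((hderiv z (show (1:ℝ) ≤ z from le_of_lt hz)).differentiableAt).differentiableWithinAt
    · intro z hz
      rw [interior_Ici] at hz
      have hz1 : (1:ℝ) < z := hz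
      rw [(hderiv z (le_of_lt hz1)).deriv]
      have hz0 : (0:ℝ) < z := by linarith
      have h4 : 4/(z+1)^2 ≤ 1/z := by
        rw [div_le_div_iff₀ (by positivity) hz0]
        nlinarith [sq_nonneg (z-1)]
      have h5 : 4 * (-1/(z+1)^2) = -(4/(z+1)^2) := by ring
      have h6 : z⁻¹ = 1/z := (one_div z).symm
      linarith
  have hkey : f 1 ≤ f y := hmono (by simp) (by simpa using hy) hy
  simp only [hf] at hkey
  norm_num at hkey
  have hy1 : (0:ℝ) < y + 1 := by linarith
  have heq : 2*(y-1)/(y+1) = 2 - 4*(y+1)⁻¹ := by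
    field_simp
    ring
  linarith

private lemma exp_arg_bound {c μ : ℝ} (hμ : 0 < μ) (hc : μ ≤ c) :
    c - μ - c * Real.log (c / μ) ≤ -((c - μ)^2 / (c + μ)) := by
  have hy : 1 ≤ c / μ := (one_le_div hμ).2 hc
  have hlog := log_key hy
  have hc0 : 0 < c := lt_of_lt_of_le hμ hc
  have hcm : 0 < c + μ := by linarith
  have heq : 2 * (c/μ - 1) / (c/μ + 1) = 2 * (c - μ) / (c + μ) := by
    rw [div_eq_div_iff (by positivity) (ne_of_gt hcm)]
    field_simp
  rw [heq] at hlog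
  have h2 : c * (2 * (c - μ) / (c + μ)) ≤ c * Real.log (c / μ) :=
    mul_le_mul_of_nonneg_left hlog (le_of_lt hc0)
  have h3 : c - μ - c * (2 * (c - μ) / (c + μ)) = -((c - μ)^2 / (c + μ)) := by
    field_simp
    ring
  linarith

private lemma total_mass {ι : Type*} [DecidableEq ι] (q : ι → ℝ) (A : Finset ι) :
    ∑ U ∈ A.powerset, (∏ i ∈ U, q i) * ∏ i ∈ A \ U, (1 - q i) = 1 := by
  rw [← Finset.prod_add]
  simp

private lemma mgf_eq {ι : Type*} [DecidableEq ι] (q : ι → ℝ) (A : Finset ι) (t : ℝ) :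
    ∑ U ∈ A.powerset, ((∏ i ∈ U, q i) * ∏ i ∈ A \ U, (1 - q i)) * Real.exp (t * U.card)
      = ∏ i ∈ A, (q i * Real.exp t + (1 - q i)) := by
  rw [Finset.prod_add]
  refine Finset.sum_congr rfl fun U hU => ?_
  rw [Finset.prod_mul_distrib, Finset.prod_const, ← Real.exp_nat_mul]
  ring_nf

private lemma chernoff_tail {ι : Type*} [DecidableEq ι] (q : ι → ℝ) (A : Finset ι)
    (hq0 : ∀ i, 0 ≤ q i) (hq1 : ∀ i, q i ≤ 1)
    (K : ℕ) (t μ : ℝ) (ht : 0 ≤ t) (hμ : ∑ i ∈ A, q i ≤ μ) :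
    ∑ U ∈ A.powerset.filter (fun U => ¬ U.card ≤ K),
        (∏ i ∈ U, q i) * ∏ i ∈ A \ U, (1 - q i)
      ≤ Real.exp (μ * (Real.exp t - 1) - t * K) := by
  have hw : ∀ U : Finset ι, 0 ≤ (∏ i ∈ U, q i) * ∏ i ∈ A \ U, (1 - q i) := by
    intro U
    apply mul_nonneg
    · exact Finset.prod_nonneg (fun i _ => hq0 i)
    · exact Finset.prod_nonneg (fun i _ => by linarith [hq1 i])
  have het : 1 ≤ Real.exp t := Real.one_le_exp ht
  calc ∑ U ∈ A.powerset.filter (fun U => ¬ U.card ≤ K),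
        (∏ i ∈ U, q i) * ∏ i ∈ A \ U, (1 - q i)
      ≤ ∑ U ∈ A.powerset.filter (fun U => ¬ U.card ≤ K),
        ((∏ i ∈ U, q i) * ∏ i ∈ A \ U, (1 - q i)) * Real.exp (t * U.card) * Real.exp (-(t*K)) := by
        apply Finset.sum_le_sum
        intro U hU
        rw [Finset.mem_filter] at hU
        have hcard : (K:ℝ) ≤ U.card := by
          have := hU.2
          push_neg at this
          exact_mod_cast le_of_lt this
        have h1 : (1:ℝ) ≤ Real.exp (t * U.card) * Real.exp (-(t*K)) := by
          rw [← Real.exp_add]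
          apply Real.one_le_exp
          nlinarith
        nlinarith [hw U, mul_le_mul_of_nonneg_left h1 (hw U)]
    _ ≤ ∑ U ∈ A.powerset,
        ((∏ i ∈ U, q i) * ∏ i ∈ A \ U, (1 - q i)) * Real.exp (t * U.card) * Real.exp (-(t*K)) := by
        apply Finset.sum_le_sum_of_subset_of_nonneg (Finset.filter_subset _ _)
        intro U _ _
        exact mul_nonneg (mul_nonneg (hw U) (le_of_lt (Real.exp_pos _))) (le_of_lt (Real.exp_pos _))
    _ = (∑ U ∈ A.powerset,
        ((∏ i ∈ U, q i) * ∏ i ∈ A \ U, (1 - q i)) * Real.exp (t * U.card)) * Real.exp (-(t*K)) := by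
        rw [← Finset.sum_mul]
    _ = (∏ i ∈ A, (q i * Real.exp t + (1 - q i))) * Real.exp (-(t*K)) := by
        rw [mgf_eq]
    _ ≤ (∏ i ∈ A, Real.exp (q i * (Real.exp t - 1))) * Real.exp (-(t*K)) := by
        apply mul_le_mul_of_nonneg_right _ (le_of_lt (Real.exp_pos _))
        apply Finset.prod_le_prod
        · intro i _
          nlinarith [hq0 i, hq1 i]
        · intro i _
          have := Real.add_one_le_exp (q i * (Real.exp t - 1))
          nlinarith
    _ = Real.exp ((∑ i ∈ A, q i) * (Real.exp t - 1)) * Real.exp (-(t*K)) := by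
        rw [← Real.exp_sum, Finset.sum_mul]
    _ ≤ Real.exp (μ * (Real.exp t - 1) - t * K) := by
        rw [← Real.exp_add]
        apply Real.exp_le_exp.2
        have : (Real.exp t - 1) ≥ 0 := by linarith
        nlinarith

private lemma sum_superset_factor {n : ℕ} (p : Fin n → ℝ) (T : Finset (Fin n)) (k : ℕ)
    (hTk : T.card ≤ k) :
    ∑ S ∈ Finset.univ.filter (fun S : Finset (Fin n) => T ⊆ S ∧ S.card ≤ k),
        ((∏ i ∈ S, p i) * ∏ i ∈ Sᶜ, (1 - p i))
    = (∏ i ∈ T, p i) *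
      ∑ U ∈ Tᶜ.powerset.filter (fun U => U.card ≤ k - T.card),
        ((∏ i ∈ U, p i) * ∏ i ∈ Tᶜ \ U, (1 - p i)) := by
  rw [Finset.mul_sum]
  apply Finset.sum_bij' (i := fun S (_ : S ∈ _) => S \ T) (j := fun U (_ : U ∈ _) => U ∪ T)
  · intro S hS
    rw [Finset.mem_filter] at hS ⊢
    obtain ⟨-, hTS, hSk⟩ := hS
    refine ⟨?_, ?_⟩
    · rw [Finset.mem_powerset]
      intro a ha
      rw [Finset.mem_sdiff] at ha
      rw [Finset.mem_compl]
      exact ha.2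
    · rw [Finset.card_sdiff_of_subset hTS]
      omega
  · intro U hU
    rw [Finset.mem_filter, Finset.mem_powerset] at hU
    obtain ⟨hUc, hUk⟩ := hU
    have hdisj : Disjoint U T := by
      rw [Finset.disjoint_left]
      intro a haU haT
      have := hUc haU
      rw [Finset.mem_compl] at this
      exact this haT
    rw [Finset.mem_filter]
    refine ⟨Finset.mem_univ _, Finset.subset_union_right, ?_⟩
    rw [Finset.card_union_of_disjoint hdisj]
    omega
  · intro S hS
    rw [Finset.mem_filter] at hS
    exact Finset.sdiff_union_of_subset hS.2.1
  · intro U hU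
    rw [Finset.mem_filter, Finset.mem_powerset] at hU
    ext a
    simp only [Finset.mem_sdiff, Finset.mem_union]
    constructor
    · rintro ⟨h1 | h1, h2⟩
      · exact h1
      · exact absurd h1 h2
    · intro ha
      have := hU.1 ha
      rw [Finset.mem_compl] at this
      exact ⟨Or.inl ha, this⟩
  · intro S hS
    rw [Finset.mem_filter] at hS
    obtain ⟨-, hTS, hSk⟩ := hS
    have h1 : ∏ i ∈ S, p i = (∏ i ∈ T, p i) * ∏ i ∈ S \ T, p i := by
      rw [mul_comm, Finset.prod_sdiff hTS]
    have h2 : Sᶜ = Tᶜ \ (S \ T) := by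
      ext a
      simp only [Finset.mem_compl, Finset.mem_sdiff]
      constructor
      · intro ha
        exact ⟨fun haT => ha (hTS haT), fun hc => ha hc.1⟩
      · intro ⟨h3, h4⟩ haS
        exact (h4 ⟨haS, h3⟩).elim
    rw [h1, h2]
    ring

set_option maxHeartbeats 1000000 in
/-- Chernoff-type positive-correlation bound for the independent Bernoulli sampling with
inflated-down marginals `p_i = x_i/(1+ε)`: the probability that `T ⊆ 𝒮` and `|𝒮| ≤ k`
is at least the stated factor times `∏_{i∈T} x_i · Pr[|𝒮| ≤ k]`; moreover, when
`ε ∈ (0,1)` and `k ≥ 4m/ε + (12/ε²) log(1/ε)` the factor is at least `(1-ε)^m`. -/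
theorem stmt8 (m k n : ℕ) (hm : 1 ≤ m) (hmk : m ≤ k) (hkn : k ≤ n)
    (ε : ℝ) (hε : 0 < ε) (hεk : (1 + ε) * (m : ℝ) < ε * (k : ℝ))
    (x : Fin n → ℝ) (hx : ∀ i, x i ∈ Set.Icc (0 : ℝ) 1) (hxs : ∑ i, x i = (k : ℝ)) :
    (∀ T : Finset (Fin n), T.card = m →
      ∑ S ∈ Finset.univ.filter (fun S : Finset (Fin n) => T ⊆ S ∧ S.card ≤ k),
          ((∏ i ∈ S, x i / (1 + ε)) * ∏ i ∈ Sᶜ, (1 - x i / (1 + ε)))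
        ≥ ((1 + ε) ^ m)⁻¹
            * (1 - Real.exp (-(ε * k - (1 + ε) * m) ^ 2 / (k * (2 + ε) * (1 + ε))))
            * (∏ i ∈ T, x i)
            * ∑ S ∈ Finset.univ.filter (fun S : Finset (Fin n) => S.card ≤ k),
                ((∏ i ∈ S, x i / (1 + ε)) * ∏ i ∈ Sᶜ, (1 - x i / (1 + ε))))
    ∧ (ε < 1 → (k : ℝ) ≥ 4 * m / ε + 12 / ε ^ 2 * Real.log (1 / ε) →
        ((1 + ε) ^ m)⁻¹
            * (1 - Real.exp (-(ε * k - (1 + ε) * m) ^ 2 / (k * (2 + ε) * (1 + ε))))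
          ≥ (1 - ε) ^ m) := by
  have hε1 : (0:ℝ) < 1 + ε := by linarith
  have hk0 : (0:ℝ) < (k:ℝ) := by exact_mod_cast (show 0 < k by omega)
  have hden : (0:ℝ) < (k:ℝ)*(2+ε)*(1+ε) := by positivity
  have hDpos : (0:ℝ) < ε*(k:ℝ) - (1+ε)*(m:ℝ) := by linarith
  have hA_nonneg : (0:ℝ) ≤ (ε*(k:ℝ)-(1+ε)*(m:ℝ))^2/((k:ℝ)*(2+ε)*(1+ε)) := by positivity
  have hnegdiv : -(ε*(k:ℝ)-(1+ε)*(m:ℝ))^2/((k:ℝ)*(2+ε)*(1+ε))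
      = -((ε*(k:ℝ)-(1+ε)*(m:ℝ))^2/((k:ℝ)*(2+ε)*(1+ε))) := neg_div _ _
  have hexp_le_one : Real.exp (-(ε*(k:ℝ)-(1+ε)*(m:ℝ))^2/((k:ℝ)*(2+ε)*(1+ε))) ≤ 1 := by
    rw [hnegdiv]
    calc Real.exp (-((ε*(k:ℝ)-(1+ε)*(m:ℝ))^2/((k:ℝ)*(2+ε)*(1+ε)))) ≤ Real.exp 0 :=
          Real.exp_le_exp.2 (by linarith)
      _ = 1 := Real.exp_zero
  constructor
  · intro T hT
    set p : Fin n → ℝ := fun i => x i / (1 + ε) with hpdef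
    have hpe : ∀ i, x i / (1+ε) = p i := fun i => rfl
    have hp0 : ∀ i, 0 ≤ p i := fun i => div_nonneg (hx i).1 hε1.le
    have hp1 : ∀ i, p i ≤ 1 := fun i => by
      rw [hpdef]
      exact (div_le_one hε1).2 (by linarith [(hx i).2])
    have hmkR : (m:ℝ) < (k:ℝ) := by
      by_contra h
      push_neg at h
      nlinarith [mul_le_mul_of_nonneg_left h hε.le]
    set μ : ℝ := (k:ℝ)/(1+ε) with hμdef
    set c : ℝ := (k:ℝ) - m with hcdef
    have hμpos : 0 < μ := div_pos hk0 hε1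
    have hμc : μ < c := by
      rw [hμdef, hcdef, div_lt_iff₀ hε1]
      nlinarith
    have hc0 : 0 < c := lt_trans hμpos hμc
    set t : ℝ := Real.log (c/μ) with htdef
    have ht0 : 0 ≤ t := Real.log_nonneg ((one_le_div hμpos).2 hμc.le)
    have hexpt : Real.exp t = c/μ := Real.exp_log (div_pos hc0 hμpos)
    have hsump : ∑ i ∈ Tᶜ, p i ≤ μ := by
      have h1 : ∑ i ∈ Tᶜ, p i ≤ ∑ i ∈ Finset.univ, p i :=
        Finset.sum_le_sum_of_subset_of_nonneg (Finset.subset_univ _) (fun i _ _ => hp0 i)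
      have h2 : ∑ i ∈ Finset.univ, p i = μ := by
        rw [hpdef, hμdef, ← Finset.sum_div, hxs]
      linarith
    have hAle : (ε*(k:ℝ) - (1+ε)*(m:ℝ))^2 / ((k:ℝ)*(2+ε)*(1+ε)) ≤ (c-μ)^2/(c+μ) := by
      have hm0 : (0:ℝ) ≤ (m:ℝ) := Nat.cast_nonneg m
      have hpos2 : (0:ℝ) < (2+ε)*(k:ℝ) - (1+ε)*(m:ℝ) := by nlinarith
      have e1 : c - μ = (ε*(k:ℝ) - (1+ε)*(m:ℝ))/(1+ε) := by
        rw [hcdef, hμdef]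
        field_simp
        ring
      have e2 : c + μ = ((2+ε)*(k:ℝ) - (1+ε)*(m:ℝ))/(1+ε) := by
        rw [hcdef, hμdef]
        field_simp
        ring
      have e3 : (c-μ)^2/(c+μ)
          = (ε*(k:ℝ)-(1+ε)*(m:ℝ))^2 / ((1+ε)*((2+ε)*(k:ℝ) - (1+ε)*(m:ℝ))) := by
        rw [e1, e2, div_pow]
        field_simp
      have hpos3 : (0:ℝ) < (1+ε)*((2+ε)*(k:ℝ) - (1+ε)*(m:ℝ)) := mul_pos hε1 hpos2
      have hle3 : (1+ε)*((2+ε)*(k:ℝ) - (1+ε)*(m:ℝ)) ≤ (k:ℝ)*(2+ε)*(1+ε) := by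
        nlinarith [hm0, sq_nonneg (1+ε)]
      rw [e3]
      exact div_le_div_of_nonneg_left (sq_nonneg _) hpos3 hle3
    have htail := chernoff_tail p Tᶜ hp0 hp1 (k - m) t μ ht0 hsump
    have hKcast : ((k - m : ℕ):ℝ) = c := by
      rw [hcdef]
      push_cast [hmk]
      ring
    rw [hKcast] at htail
    have harg : μ * (Real.exp t - 1) - t * c = c - μ - c * Real.log (c/μ) := by
      rw [hexpt, htdef]
      field_simp
    rw [harg] at htail
    have hbound := exp_arg_bound hμpos hμc.le
    have htail2 : ∑ U ∈ Tᶜ.powerset.filter (fun U => ¬ U.card ≤ k - m),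
        (∏ i ∈ U, p i) * ∏ i ∈ Tᶜ \ U, (1 - p i)
        ≤ Real.exp (-(ε*(k:ℝ)-(1+ε)*(m:ℝ))^2/((k:ℝ)*(2+ε)*(1+ε))) := by
      refine le_trans htail ?_
      rw [hnegdiv]
      exact Real.exp_le_exp.2 (by linarith)
    have hW : 1 - Real.exp (-(ε*(k:ℝ)-(1+ε)*(m:ℝ))^2/((k:ℝ)*(2+ε)*(1+ε)))
        ≤ ∑ U ∈ Tᶜ.powerset.filter (fun U => U.card ≤ k - m),
            (∏ i ∈ U, p i) * ∏ i ∈ Tᶜ \ U, (1 - p i) := by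
      have hsplit := Finset.sum_filter_add_sum_filter_not Tᶜ.powerset
        (fun U => U.card ≤ k - m) (fun U => (∏ i ∈ U, p i) * ∏ i ∈ Tᶜ \ U, (1 - p i))
      have htot := total_mass p Tᶜ
      linarith
    have hw0 : ∀ S : Finset (Fin n), 0 ≤ (∏ i ∈ S, p i) * ∏ i ∈ Sᶜ, (1 - p i) := by
      intro S
      apply mul_nonneg
      · exact Finset.prod_nonneg (fun i _ => hp0 i)
      · exact Finset.prod_nonneg (fun i _ => by linarith [hp1 i])
    have hWu_nonneg : 0 ≤ ∑ S ∈ Finset.univ.filter (fun S : Finset (Fin n) => S.card ≤ k),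
        ((∏ i ∈ S, p i) * ∏ i ∈ Sᶜ, (1 - p i)) :=
      Finset.sum_nonneg (fun S _ => hw0 S)
    have hWu_le : ∑ S ∈ Finset.univ.filter (fun S : Finset (Fin n) => S.card ≤ k),
        ((∏ i ∈ S, p i) * ∏ i ∈ Sᶜ, (1 - p i)) ≤ 1 := by
      calc ∑ S ∈ Finset.univ.filter (fun S : Finset (Fin n) => S.card ≤ k),
            ((∏ i ∈ S, p i) * ∏ i ∈ Sᶜ, (1 - p i))
          ≤ ∑ S ∈ (Finset.univ : Finset (Finset (Fin n))),
            ((∏ i ∈ S, p i) * ∏ i ∈ Sᶜ, (1 - p i)) :=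
            Finset.sum_le_sum_of_subset_of_nonneg (Finset.filter_subset _ _)
              (fun S _ _ => hw0 S)
        _ = ∑ S ∈ (Finset.univ : Finset (Fin n)).powerset,
            ((∏ i ∈ S, p i) * ∏ i ∈ Finset.univ \ S, (1 - p i)) := by
            rw [Finset.powerset_univ]
            exact Finset.sum_congr rfl (fun S _ => by rw [Finset.compl_eq_univ_sdiff])
        _ = 1 := total_mass p Finset.univ
    have hfact := sum_superset_factor p T k (by rw [hT]; exact hmk)
    rw [hT] at hfact
    have hpT : ∏ i ∈ T, p i = ((1+ε)^m)⁻¹ * ∏ i ∈ T, x i := by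
      have : ∏ i ∈ T, p i = (∏ i ∈ T, x i)/((1+ε)^m) := by
        rw [hpdef]
        rw [Finset.prod_div_distrib, Finset.prod_const, hT]
      rw [this, div_eq_mul_inv, mul_comm]
    have hF0 : 0 ≤ 1 - Real.exp (-(ε*(k:ℝ)-(1+ε)*(m:ℝ))^2/((k:ℝ)*(2+ε)*(1+ε))) := by
      linarith
    have hPT0 : 0 ≤ ∏ i ∈ T, p i := Finset.prod_nonneg (fun i _ => hp0 i)
    simp only [hpe]
    rw [hfact, ge_iff_le]
    set G := Real.exp (-(ε*(k:ℝ)-(1+ε)*(m:ℝ))^2/((k:ℝ)*(2+ε)*(1+ε))) with hGdef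
    set Wu := ∑ S ∈ Finset.univ.filter (fun S : Finset (Fin n) => S.card ≤ k),
        ((∏ i ∈ S, p i) * ∏ i ∈ Sᶜ, (1 - p i)) with hWudef
    set WT := ∑ U ∈ Tᶜ.powerset.filter (fun U => U.card ≤ k - m),
        (∏ i ∈ U, p i) * ∏ i ∈ Tᶜ \ U, (1 - p i) with hWTdef
    calc ((1+ε)^m)⁻¹ * (1-G) * (∏ i ∈ T, x i) * Wu
        = (∏ i ∈ T, p i) * ((1-G) * Wu) := by rw [hpT]; ring
      _ ≤ (∏ i ∈ T, p i) * WT := by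
          apply mul_le_mul_of_nonneg_left _ hPT0
          calc (1-G)*Wu ≤ (1-G)*1 := mul_le_mul_of_nonneg_left hWu_le hF0
            _ = 1-G := mul_one _
            _ ≤ WT := hW
  · intro hε1' hk
    set L := Real.log (1/ε) with hLdef
    have hL : 0 ≤ L := Real.log_nonneg (by rw [le_div_iff₀ hε]; linarith)
    have hm0 : (0:ℝ) ≤ (m:ℝ) := Nat.cast_nonneg m
    have h1 : 4*(m:ℝ)*ε + 12*L ≤ ε^2*(k:ℝ) := by
      have h0 := mul_le_mul_of_nonneg_left hk (le_of_lt (show (0:ℝ) < ε^2 by positivity))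
      have he : ε^2*(4*(m:ℝ)/ε + 12/ε^2*L) = 4*(m:ℝ)*ε + 12*L := by
        field_simp
      linarith [he ▸ h0]
    have h3 : (0:ℝ) ≤ ε*(k:ℝ) - 4*(m:ℝ) := by
      have h2 : ε*(0:ℝ) ≤ ε*(ε*(k:ℝ) - 4*(m:ℝ)) := by nlinarith
      linarith [le_of_mul_le_mul_left h2 hε]
    have hd1 : ε*(k:ℝ) - 2*(m:ℝ) ≤ ε*(k:ℝ) - (1+ε)*(m:ℝ) := by nlinarith
    have hd0 : (0:ℝ) ≤ ε*(k:ℝ) - 2*(m:ℝ) := by linarith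
    have h8 : ε^2*(12*L*(k:ℝ)) ≤ ε^2*((ε*(k:ℝ) - 2*(m:ℝ))^2) := by
      have hb : (0:ℝ) ≤ (m:ℝ)*ε := mul_nonneg hm0 hε.le
      have hab : (0:ℝ) ≤ ε^2*(k:ℝ) - 4*((m:ℝ)*ε) - 12*L := by linarith
      nlinarith [mul_nonneg hb hab, mul_nonneg hL hab, sq_nonneg (ε^2*(k:ℝ) - 4*((m:ℝ)*ε) - 12*L),
        sq_nonneg ((m:ℝ)*ε)]
    have h9 : 12*L*(k:ℝ) ≤ (ε*(k:ℝ) - 2*(m:ℝ))^2 :=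
      le_of_mul_le_mul_left h8 (show (0:ℝ) < ε^2 by positivity)
    have h6 : (2+ε)*(1+ε) ≤ 6 := by nlinarith
    have hD2 : 2*L*((k:ℝ)*(2+ε)*(1+ε)) ≤ (ε*(k:ℝ) - (1+ε)*(m:ℝ))^2 := by
      have h10 : 2*L*((k:ℝ)*(2+ε)*(1+ε)) ≤ 12*L*(k:ℝ) := by
        nlinarith [mul_nonneg hL hk0.le]
      nlinarith [hd1, hd0, hDpos]
    have hA2L : 2*L ≤ (ε*(k:ℝ)-(1+ε)*(m:ℝ))^2/((k:ℝ)*(2+ε)*(1+ε)) :=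
      (le_div_iff₀ hden).2 hD2
    have hexpA : Real.exp (-(ε*(k:ℝ)-(1+ε)*(m:ℝ))^2/((k:ℝ)*(2+ε)*(1+ε))) ≤ ε^2 := by
      rw [hnegdiv]
      calc Real.exp (-((ε*(k:ℝ)-(1+ε)*(m:ℝ))^2/((k:ℝ)*(2+ε)*(1+ε))))
          ≤ Real.exp (-(2*L)) := Real.exp_le_exp.2 (by linarith)
        _ = ε^2 := by
            rw [show -(2*L) = Real.log ε + Real.log ε by
              rw [hLdef, one_div, Real.log_inv]; ring]
            rw [Real.exp_add, Real.exp_log hε]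
            ring
    have hpow : (0:ℝ) < (1+ε)^m := by positivity
    rw [ge_iff_le, inv_mul_eq_div, le_div_iff₀ hpow]
    have hmul : (1-ε)^m * (1+ε)^m = (1-ε^2)^m := by
      rw [← mul_pow]
      congr 1
      ring
    rw [hmul]
    have hle1 : (1-ε^2)^m ≤ 1-ε^2 := by
      apply pow_le_of_le_one
      · nlinarith
      · nlinarith
      · omega
    linarith
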